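/- arXiv:2410.02617 — 2 statements merged into one kernel-verified Lean document; each statement's English description precedes it below -/
import Mathlib

section
/- Let A and B be tadpole matrices with heads D_A C^k and D_B C^ℓ and tail parameters (a_j), (b_j) respectively. Then AB is a tadpole matrix with head D_{AB} C^r where D_{AB} = D_A (C^k D_B C^{−k}), r ≡ k + ℓ (mod p), and tail parameters c_j ≡ a_j + b_j + j (mod p) when k + ℓ ≥ p (and c_j ≡ a_j + b_j (mod p) when k + ℓ < p). -/
open Matrix

/-- The `p × p` cyclic permutation matrix. -/
def cycleMatrix (p : ℕ) : Matrix (Fin p) (Fin p) ℂ :=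
  Matrix.of fun i j => if (j : ℕ) = ((i : ℕ) + 1) % p then 1 else 0

/-- The fixed primitive `p²`-th root of unity `ξ = e^{2πi/p²}`. -/
noncomputable def xi (p : ℕ) : ℂ := Complex.exp (2 * Real.pi * Complex.I / (p ^ 2))

/-- The tadpole matrix with head `D C^k` (where `D = diagonal d`) and tail
`diag(ξ^{0·k + a_0 p}, ξ^{1·k + a_1 p}, …, ξ^{(p-1)k + a_{p-1} p})`.
We index the `2p × 2p` matrix by `Fin p ⊕ Fin p`. -/
noncomputable def tadpole (p : ℕ) (d : Fin p → ℂ) (k : ℕ) (a : Fin p → ℕ) :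
    Matrix (Fin p ⊕ Fin p) (Fin p ⊕ Fin p) ℂ :=
  Matrix.fromBlocks (Matrix.diagonal d * cycleMatrix p ^ k) 0 0
    (Matrix.diagonal fun j : Fin p => xi p ^ ((j : ℕ) * k + a j * p))

/-- Membership in the set `𝒯` of tadpole matrices: `D` is unitary diagonal of
determinant one, `k ∈ {0, …, p-1}`, `a_j ∈ {0, …, p-1}` and `a_0 = 0` (so the first
tail entry is `1`). -/
def IsTadpole (p : ℕ) (A : Matrix (Fin p ⊕ Fin p) (Fin p ⊕ Fin p) ℂ) : Prop :=
  ∃ (d : Fin p → ℂ) (k : ℕ) (a : Fin p → ℕ),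
    (∀ i, ‖d i‖ = 1) ∧ (∏ i, d i = 1) ∧ k < p ∧ (∀ j, a j < p) ∧
    (∀ j : Fin p, (j : ℕ) = 0 → a j = 0) ∧ A = tadpole p d k a



lemma cycle_pow (p : ℕ) (hp : 0 < p) (m : ℕ) :
    cycleMatrix p ^ m = Matrix.of fun i j : Fin p => if (j : ℕ) = ((i : ℕ) + m) % p then 1 else 0 := by
  induction m with
  | zero =>
    ext i j
    simp [Matrix.one_apply, Nat.mod_eq_of_lt i.isLt, Fin.ext_iff, eq_comm]
  | succ m ih =>
    ext i j
    rw [pow_succ, ih]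
    simp only [Matrix.mul_apply, Matrix.of_apply, cycleMatrix]
    rw [Finset.sum_eq_single (⟨((i : ℕ) + m) % p, Nat.mod_lt _ hp⟩ : Fin p)]
    · simp only [if_pos rfl, if_true, one_mul]
      rw [Nat.mod_add_mod, ← add_assoc]
    · intro t _ ht
      have : (t : ℕ) ≠ ((i : ℕ) + m) % p := fun h => ht (Fin.ext h)
      simp [this]
    · simp

lemma cycle_pow_p (p : ℕ) (hp : 0 < p) : cycleMatrix p ^ p = 1 := by
  rw [cycle_pow p hp]
  ext i j
  simp [Matrix.one_apply, Nat.add_mod_right, Nat.mod_eq_of_lt i.isLt, Fin.ext_iff, eq_comm]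

lemma cycle_pow_mod (p : ℕ) (hp : 0 < p) (m : ℕ) :
    cycleMatrix p ^ m = cycleMatrix p ^ (m % p) := by
  conv_lhs => rw [← Nat.mod_add_div m p]
  rw [pow_add, pow_mul, cycle_pow_p p hp, one_pow, mul_one]

lemma xi_pow_p2 (p : ℕ) (hp : 0 < p) : xi p ^ (p ^ 2) = 1 := by
  have hne : ((p : ℂ) ^ 2) ≠ 0 := pow_ne_zero 2 (Nat.cast_ne_zero.mpr hp.ne')
  rw [xi, ← Complex.exp_nat_mul]
  push_cast
  rw [mul_div_cancel₀ _ hne]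
  exact Complex.exp_two_pi_mul_I

lemma xi_pow_congr (p : ℕ) (hp : 0 < p) {m n : ℕ} (h : m % p ^ 2 = n % p ^ 2) :
    xi p ^ m = xi p ^ n := by
  rw [← Nat.mod_add_div m (p ^ 2), ← Nat.mod_add_div n (p ^ 2), pow_add, pow_add,
    pow_mul, pow_mul, xi_pow_p2 p hp, one_pow, one_pow, h]

/-- Product formula for tadpole matrices: if `A` has head `D_A C^k` and tail parameters
`(a_j)` and `B` has head `D_B C^ℓ` and tail parameters `(b_j)`, then `A * B` is the
tadpole matrix with head `D_{AB} C^r`, where `D_{AB} = D_A (C^k D_B C^{-k})`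
(here `C^{-k} = C^{p-k}` since `C^p = 1`), `r ≡ k + ℓ (mod p)`, and tail parameters
`c_j ≡ a_j + b_j + j (mod p)` if `k + ℓ ≥ p`, and `c_j ≡ a_j + b_j (mod p)` otherwise. -/
theorem tadpole_mul_formula (p : ℕ) (hp : p.Prime) (hodd : Odd p)
    (dA dB : Fin p → ℂ) (k ℓ : ℕ) (a b : Fin p → ℕ)
    (hdA : ∀ i, ‖dA i‖ = 1) (hdetA : ∏ i, dA i = 1) (hk : k < p)
    (ha : ∀ j, a j < p) (ha0 : ∀ j : Fin p, (j : ℕ) = 0 → a j = 0)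
    (hdB : ∀ i, ‖dB i‖ = 1) (hdetB : ∏ i, dB i = 1) (hl : ℓ < p)
    (hb : ∀ j, b j < p) (hb0 : ∀ j : Fin p, (j : ℕ) = 0 → b j = 0) :
    tadpole p dA k a * tadpole p dB ℓ b =
      Matrix.fromBlocks
        ((Matrix.diagonal dA * (cycleMatrix p ^ k * Matrix.diagonal dB * cycleMatrix p ^ (p - k)))
          * cycleMatrix p ^ ((k + ℓ) % p)) 0 0
        (Matrix.diagonal fun j : Fin p =>
          xi p ^ ((j : ℕ) * ((k + ℓ) % p) +
            ((a j + b j + if p ≤ k + ℓ then (j : ℕ) else 0) % p) * p)) := by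
  have hp0 : 0 < p := hp.pos
  rw [tadpole, tadpole, Matrix.fromBlocks_multiply]
  simp only [Matrix.mul_zero, Matrix.zero_mul, mul_zero, zero_mul, add_zero, zero_add,
    Matrix.diagonal_mul_diagonal]
  have hC : cycleMatrix p ^ (p - k) * cycleMatrix p ^ ((k + ℓ) % p) = cycleMatrix p ^ ℓ := by
    rw [← pow_add, cycle_pow_mod p hp0 (p - k + (k + ℓ) % p), Nat.add_mod_mod,
      show p - k + (k + ℓ) = p + ℓ by omega, Nat.add_mod_left, Nat.mod_eq_of_lt hl]
  simp only [mul_assoc]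
  rw [hC]
  have hdiag : (fun i : Fin p => xi p ^ ((i : ℕ) * k + a i * p) * xi p ^ ((i : ℕ) * ℓ + b i * p))
      = fun j : Fin p => xi p ^ ((j : ℕ) * ((k + ℓ) % p) +
        ((a j + b j + if p ≤ k + ℓ then (j : ℕ) else 0) % p) * p) := by
    funext j
    rw [← pow_add]
    apply xi_pow_congr p hp0
    set jj := (j : ℕ) with hjj
    set ja := a j with hja
    set jb := b j with hjb
    by_cases hkl : p ≤ k + ℓ
    · rw [if_pos hkl]
      have h1 : (k + ℓ) % p = k + ℓ - p := by
        rw [Nat.mod_eq_sub_mod hkl]; exact Nat.mod_eq_of_lt (by omega)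
      have hr : (((k + ℓ) % p : ℕ) : ℤ) = (k : ℤ) + ℓ - p := by rw [h1]; omega
      obtain ⟨t, ht⟩ : ∃ t, ja + jb + jj = p * t + (ja + jb + jj) % p :=
        ⟨_ / p, (Nat.div_add_mod _ p).symm⟩
      have ht' : (ja : ℤ) + jb + jj = p * t + ((ja + jb + jj) % p : ℕ) := by exact_mod_cast ht
      refine (Nat.modEq_iff_dvd).mpr ⟨-t, ?_⟩
      push_cast at hr ht' ⊢
      rw [hr]
      linear_combination (-(p : ℤ)) * ht'
    · rw [if_neg hkl, add_zero]
      have hr : (((k + ℓ) % p : ℕ) : ℤ) = (k : ℤ) + ℓ := by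
        rw [Nat.mod_eq_of_lt (by omega)]; push_cast; ring
      obtain ⟨t, ht⟩ : ∃ t, ja + jb = p * t + (ja + jb) % p :=
        ⟨_ / p, (Nat.div_add_mod _ p).symm⟩
      have ht' : (ja : ℤ) + jb = p * t + ((ja + jb) % p : ℕ) := by exact_mod_cast ht
      refine (Nat.modEq_iff_dvd).mpr ⟨-t, ?_⟩
      push_cast at hr ht' ⊢
      rw [hr]
      linear_combination (-(p : ℤ)) * ht'
  rw [hdiag]
end

section
/- Let A, B be tadpole matrices such that A is diagonal (k_A = 0) and B is not. Then σ(AB) ⊆ σ(A)·σ(B), i.e., every eigenvalue of AB is a product of an eigenvalue of A and an eigenvalue of B. -/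
open Matrix

lemma cycle_pow_apply {p : ℕ} (hp0 : 0 < p) (k : ℕ) (i j : Fin p) :
    (cycleMatrix p ^ k) i j = if (j : ℕ) = ((i : ℕ) + k) % p then 1 else 0 := by
  induction k generalizing i j with
  | zero =>
    simp only [pow_zero, Matrix.one_apply, Nat.add_zero, Nat.mod_eq_of_lt i.isLt]
    simp [Fin.ext_iff, eq_comm]
  | succ k ih =>
    rw [pow_succ, Matrix.mul_apply]
    simp only [ih]
    have hm : ((i : ℕ) + k) % p < p := Nat.mod_lt _ hp0
    rw [Finset.sum_eq_single (⟨((i : ℕ) + k) % p, hm⟩ : Fin p)]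
    · have : ((i : ℕ) + k) % p + 1 ≡ (i : ℕ) + (k + 1) [MOD p] := by
        have := (Nat.mod_modEq ((i : ℕ) + k) p).add_right 1
        simpa [Nat.add_assoc] using this
      simp only [cycleMatrix, Matrix.of_apply, if_true, one_mul]
      rw [this]
    · intro m _ hm'
      rw [if_neg (fun h => hm' (Fin.ext h)), zero_mul]
    · simp

/-- Auxiliary: `e` evaluated at a natural number index modulo `p`. -/
def cycE {p : ℕ} (hp0 : 0 < p) (e : Fin p → ℂ) (n : ℕ) : ℂ :=
  e ⟨n % p, Nat.mod_lt _ hp0⟩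

lemma cycE_mod_add {p : ℕ} (hp0 : 0 < p) (e : Fin p → ℂ) (n m : ℕ) :
    cycE hp0 e (n % p + m) = cycE hp0 e (n + m) := by
  unfold cycE
  congr 1
  exact Fin.ext (Nat.mod_add_mod n p m)

lemma cycE_mod {p : ℕ} (hp0 : 0 < p) (e : Fin p → ℂ) (n : ℕ) :
    cycE hp0 e (n % p) = cycE hp0 e n := by
  unfold cycE
  congr 1
  exact Fin.ext (Nat.mod_mod_of_dvd n dvd_rfl)

lemma cycE_coe {p : ℕ} (hp0 : 0 < p) (e : Fin p → ℂ) (i : Fin p) :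
    cycE hp0 e (i : ℕ) = e i := by
  unfold cycE
  congr 1
  exact Fin.ext (Nat.mod_eq_of_lt i.isLt)

lemma headPow_apply {p : ℕ} (hp0 : 0 < p) (e : Fin p → ℂ) (ℓ t : ℕ) (i j : Fin p) :
    ((Matrix.diagonal e * cycleMatrix p ^ ℓ) ^ t) i j =
      if (j : ℕ) = ((i : ℕ) + t * ℓ) % p then
        ∏ s ∈ Finset.range t, cycE hp0 e ((i : ℕ) + s * ℓ) else 0 := by
  induction t generalizing i j with
  | zero =>
    simp [Matrix.one_apply, Nat.mod_eq_of_lt i.isLt, Fin.ext_iff, eq_comm]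
  | succ t ih =>
    rw [pow_succ', Matrix.mul_apply]
    have hdc : ∀ m : Fin p, (Matrix.diagonal e * cycleMatrix p ^ ℓ) i m
        = e i * (if (m : ℕ) = ((i : ℕ) + ℓ) % p then 1 else 0) := by
      intro m
      rw [Matrix.diagonal_mul, cycle_pow_apply hp0]
    simp only [hdc, ih]
    have hm : ((i : ℕ) + ℓ) % p < p := Nat.mod_lt _ hp0
    rw [Finset.sum_eq_single (⟨((i : ℕ) + ℓ) % p, hm⟩ : Fin p)]
    · simp only [if_pos rfl, if_true, mul_one]
      have hcond : ((((i : ℕ) + ℓ) % p : ℕ) + t * ℓ) % p = ((i : ℕ) + (t + 1) * ℓ) % p := by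
        rw [Nat.mod_add_mod]
        congr 1
        ring
      have hprodarg : ∀ s : ℕ, cycE hp0 e ((((i : ℕ) + ℓ) % p : ℕ) + s * ℓ)
          = cycE hp0 e ((i : ℕ) + (s + 1) * ℓ) := by
        intro s
        rw [cycE_mod_add]
        congr 1
        ring
      rw [hcond]
      by_cases hj : (j : ℕ) = ((i : ℕ) + (t + 1) * ℓ) % p
      · rw [if_pos hj, if_pos hj, Finset.prod_range_succ']
        simp only [hprodarg]
        rw [mul_comm]
        congr 1
        have : ((i : ℕ) + 0 * ℓ) = (i : ℕ) := by ring
        rw [this, cycE_coe]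
      · rw [if_neg hj, if_neg hj, mul_zero]
    · intro m _ hm'
      rw [if_neg (fun h => hm' (Fin.ext h)), mul_zero, zero_mul]
    · simp

lemma cycBij {p : ℕ} (hp : p.Prime) {ℓ : ℕ} (hl : ¬ p ∣ ℓ) (i : ℕ) :
    Function.Bijective (fun s : Fin p =>
      (⟨(i + (s : ℕ) * ℓ) % p, Nat.mod_lt _ hp.pos⟩ : Fin p)) := by
  refine Finite.injective_iff_bijective.mp ?_
  intro s t h
  simp only [Fin.mk.injEq] at h
  have h1 : i + (s : ℕ) * ℓ ≡ i + (t : ℕ) * ℓ [MOD p] := h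
  have h2 : (s : ℕ) * ℓ ≡ (t : ℕ) * ℓ [MOD p] := Nat.ModEq.add_left_cancel' i h1
  have h3 : (s : ℕ) ≡ (t : ℕ) [MOD p] :=
    Nat.ModEq.cancel_right_of_coprime ((Nat.Prime.coprime_iff_not_dvd hp).mpr hl) h2
  have := h3
  unfold Nat.ModEq at this
  rw [Nat.mod_eq_of_lt s.isLt, Nat.mod_eq_of_lt t.isLt] at this
  exact Fin.ext this

lemma prod_cycE {p : ℕ} (hp : p.Prime) (e : Fin p → ℂ) {ℓ : ℕ} (hl : ¬ p ∣ ℓ) (i : ℕ) :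
    ∏ s ∈ Finset.range p, cycE hp.pos e (i + s * ℓ) = ∏ j, e j := by
  rw [← Fin.prod_univ_eq_prod_range]
  exact Fintype.prod_bijective _ (cycBij hp hl i) _ _ (fun s => rfl)

lemma head_pow_p {p : ℕ} (hp : p.Prime) (e : Fin p → ℂ) {ℓ : ℕ} (hl : ¬ p ∣ ℓ)
    (he : ∏ j, e j = 1) : (Matrix.diagonal e * cycleMatrix p ^ ℓ) ^ p = 1 := by
  ext i j
  rw [headPow_apply hp.pos, prod_cycE hp e hl, he,
    Nat.add_mul_mod_self_left, Nat.mod_eq_of_lt i.isLt]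
  simp [Matrix.one_apply, Fin.ext_iff, eq_comm]

lemma mem_spectrum_iff_det {n : Type*} [Fintype n] [DecidableEq n] (M : Matrix n n ℂ) (μ : ℂ) :
    μ ∈ spectrum ℂ M ↔ (μ • (1 : Matrix n n ℂ) - M).det = 0 := by
  rw [spectrum.mem_iff, Algebra.algebraMap_eq_smul_one, Matrix.isUnit_iff_isUnit_det,
    isUnit_iff_ne_zero, not_not]

lemma pow_eq_one_of_mem_spectrum {n : Type*} [Fintype n] [DecidableEq n] [Nonempty n]
    {M : Matrix n n ℂ} {m : ℕ} (hM : M ^ m = 1) {μ : ℂ} (h : μ ∈ spectrum ℂ M) :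
    μ ^ m = 1 := by
  have := spectrum.pow_image_subset M m ⟨μ, h, rfl⟩
  rw [hM, spectrum.one_eq] at this
  exact this

lemma spectrum_fromBlocks {m n : Type*} [Fintype m] [Fintype n] [DecidableEq m] [DecidableEq n]
    (X : Matrix m m ℂ) (Y : Matrix n n ℂ) (μ : ℂ) :
    μ ∈ spectrum ℂ (Matrix.fromBlocks X 0 0 Y) ↔ μ ∈ spectrum ℂ X ∨ μ ∈ spectrum ℂ Y := by
  rw [mem_spectrum_iff_det, mem_spectrum_iff_det, mem_spectrum_iff_det,
    ← Matrix.fromBlocks_one, Matrix.fromBlocks_smul, sub_eq_add_neg, Matrix.fromBlocks_neg,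
    Matrix.fromBlocks_add]
  have h1 : μ • (0 : Matrix m n ℂ) + -0 = 0 := by simp
  have h2 : μ • (0 : Matrix n m ℂ) + -0 = 0 := by simp
  rw [h1, h2, Matrix.det_fromBlocks_zero₂₁, mul_eq_zero, ← sub_eq_add_neg, ← sub_eq_add_neg]

lemma mem_spectrum_head {p : ℕ} (hp : p.Prime) (e : Fin p → ℂ) (he0 : ∀ i, e i ≠ 0)
    (he : ∏ j, e j = 1) {ℓ : ℕ} (hl : ¬ p ∣ ℓ) {μ : ℂ} (hμ : μ ^ p = 1) :
    μ ∈ spectrum ℂ (Matrix.diagonal e * cycleMatrix p ^ ℓ) := by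
  have hp0 := hp.pos
  set M := Matrix.diagonal e * cycleMatrix p ^ ℓ with hMdef
  set φ : Fin p → Fin p :=
    fun s => ⟨(0 + (s : ℕ) * ℓ) % p, Nat.mod_lt _ hp.pos⟩ with hφ
  have hb : Function.Bijective φ := cycBij hp hl 0
  set ψ := Equiv.ofBijective φ hb with hψ
  set u : ℕ → ℂ :=
    fun t => μ ^ t * (∏ s ∈ Finset.range t, cycE hp0 e (0 + s * ℓ))⁻¹ with hu
  set v : Fin p → ℂ := fun i => u ((ψ.symm i : Fin p) : ℕ) with hv
  have hPne : ∀ t : ℕ, (∏ s ∈ Finset.range t, cycE hp0 e (0 + s * ℓ)) ≠ 0 := by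
    intro t
    exact Finset.prod_ne_zero_iff.mpr fun s _ => he0 _
  have hu0 : u 0 = 1 := by simp [hu]
  have hup : u p = 1 := by
    simp only [hu]
    rw [prod_cycE hp e hl 0, he, hμ, inv_one, mul_one]
  have hustep : ∀ t : ℕ, cycE hp0 e (0 + t * ℓ) * u (t + 1) = μ * u t := by
    intro t
    simp only [hu]
    rw [Finset.prod_range_succ, pow_succ, mul_inv]
    have h2' : cycE hp0 e (t * ℓ) ≠ 0 := he0 _
    have h1' : (∏ x ∈ Finset.range t, cycE hp0 e (x * ℓ)) ≠ 0 := by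
      simpa using hPne t
    show cycE hp0 e (0 + t * ℓ) * (μ ^ t * μ *
      ((∏ s ∈ Finset.range t, cycE hp0 e (0 + s * ℓ))⁻¹ * (cycE hp0 e (0 + t * ℓ))⁻¹))
      = μ * (μ ^ t * (∏ s ∈ Finset.range t, cycE hp0 e (0 + s * ℓ))⁻¹)
    field_simp
    linear_combination (μ * μ ^ t * (∏ s ∈ Finset.range t, cycE hp0 e (0 + s * ℓ))⁻¹) *
      mul_inv_cancel₀ (a := cycE hp0 e (0 + t * ℓ)) (he0 _)
  have hMv : M *ᵥ v = μ • v := by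
    funext i
    have hMapply : ∀ j : Fin p, M i j = if (j : ℕ) = ((i : ℕ) + 1 * ℓ) % p then
        ∏ s ∈ Finset.range 1, cycE hp0 e ((i : ℕ) + s * ℓ) else 0 := by
      intro j
      rw [hMdef, ← pow_one (Matrix.diagonal e * cycleMatrix p ^ ℓ), headPow_apply hp0]
    have hsum : (M *ᵥ v) i = ∑ j, M i j * v j := by
      simp [Matrix.mulVec, dotProduct]
    set j0 : Fin p := ⟨((i : ℕ) + 1 * ℓ) % p, Nat.mod_lt _ hp0⟩ with hj0
    have hcollapse : (M *ᵥ v) i = cycE hp0 e ((i : ℕ) + 0 * ℓ) * v j0 := by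
      rw [hsum, Finset.sum_eq_single j0]
      · rw [hMapply, if_pos rfl, Finset.prod_range_one]
      · intro m _ hm'
        rw [hMapply, if_neg (fun h => hm' (Fin.ext h)), zero_mul]
      · simp
    set t : Fin p := ψ.symm i with ht
    have hit : φ t = i := by rw [ht]; exact ψ.apply_symm_apply i
    have hival : (i : ℕ) = (0 + (t : ℕ) * ℓ) % p := (congrArg Fin.val hit).symm
    have hj0val : (j0 : ℕ) = (0 + ((t : ℕ) + 1) * ℓ) % p := by
      show ((i : ℕ) + 1 * ℓ) % p = (0 + ((t : ℕ) + 1) * ℓ) % p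
      rw [hival, Nat.mod_add_mod]
      congr 1
      ring
    set t' : Fin p := ⟨((t : ℕ) + 1) % p, Nat.mod_lt _ hp0⟩ with ht'
    have hφt' : φ t' = j0 := by
      apply Fin.ext
      show (0 + (((t : ℕ) + 1) % p) * ℓ) % p = (j0 : ℕ)
      rw [hj0val]
      have hme : ((t : ℕ) + 1) % p * ℓ ≡ ((t : ℕ) + 1) * ℓ [MOD p] :=
        (Nat.mod_modEq ((t : ℕ) + 1) p).mul_right ℓ
      exact hme.add_left 0
    have hsymm : ψ.symm j0 = t' := by
      have h1 : ψ t' = φ t' := rfl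
      rw [← hφt', ← h1, Equiv.symm_apply_apply]
    have hvj0 : v j0 = u ((t : ℕ) + 1) := by
      simp only [hv, hsymm]
      show u (((t : ℕ) + 1) % p) = u ((t : ℕ) + 1)
      by_cases hlt : (t : ℕ) + 1 < p
      · rw [Nat.mod_eq_of_lt hlt]
      · have h2 := t.isLt
        have hteq : (t : ℕ) + 1 = p := by omega
        rw [hteq, Nat.mod_self, hu0, hup]
    have hvi : v i = u (t : ℕ) := by simp only [hv, ← ht]
    rw [hcollapse, hvj0]
    have hci : cycE hp0 e ((i : ℕ) + 0 * ℓ) = cycE hp0 e (0 + (t : ℕ) * ℓ) := by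
      have h1 : (i : ℕ) + 0 * ℓ = (i : ℕ) := by ring
      rw [h1, hival, cycE_mod]
    rw [hci, hustep, Pi.smul_apply, smul_eq_mul, hvi]
  have hv0 : v ≠ 0 := by
    intro h0
    have h1 : v (φ ⟨0, hp0⟩) = 1 := by
      have hs : ψ.symm (φ ⟨0, hp0⟩) = ⟨0, hp0⟩ := by
        have h2 : ψ ⟨0, hp0⟩ = φ ⟨0, hp0⟩ := rfl
        rw [← h2, Equiv.symm_apply_apply]
      simp only [hv, hs]
      exact hu0
    rw [h0] at h1
    simp at h1
  have hdet : (M - μ • 1).det = 0 := by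
    rw [← Matrix.exists_mulVec_eq_zero_iff]
    refine ⟨v, hv0, ?_⟩
    rw [Matrix.sub_mulVec, hMv, Matrix.smul_mulVec, Matrix.one_mulVec, sub_self]
  rw [mem_spectrum_iff_det]
  have hns : μ • (1 : Matrix (Fin p) (Fin p) ℂ) - M = -(M - μ • 1) := (neg_sub _ _).symm
  rw [hns, Matrix.det_neg, hdet, mul_zero]

open Pointwise in
/-- If `A` is a diagonal tadpole matrix (head parameter `k = 0`) and `B` is a
non-diagonal tadpole matrix, then every eigenvalue of `AB` is the product of an
eigenvalue of `A` and an eigenvalue of `B`. -/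
theorem tadpole_spectrum_mul_subset_of_diagonal_left (p : ℕ) (hp : p.Prime) (hodd : Odd p)
    (dA dB : Fin p → ℂ) (ℓ : ℕ) (a b : Fin p → ℕ)
    (hdA : ∀ i, ‖dA i‖ = 1) (hdetA : ∏ i, dA i = 1)
    (ha : ∀ j, a j < p) (ha0 : ∀ j : Fin p, (j : ℕ) = 0 → a j = 0)
    (hdB : ∀ i, ‖dB i‖ = 1) (hdetB : ∏ i, dB i = 1)
    (hl : ℓ < p) (hl0 : ℓ ≠ 0)
    (hb : ∀ j, b j < p) (hb0 : ∀ j : Fin p, (j : ℕ) = 0 → b j = 0) :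
    spectrum ℂ (tadpole p dA 0 a * tadpole p dB ℓ b) ⊆
      spectrum ℂ (tadpole p dA 0 a) * spectrum ℂ (tadpole p dB ℓ b) := by
  have hp0 := hp.pos
  haveI : Nonempty (Fin p) := ⟨⟨0, hp0⟩⟩
  have hpl : ¬ p ∣ ℓ := fun h =>
    absurd (Nat.le_of_dvd (Nat.pos_of_ne_zero hl0) h) (not_le.mpr hl)
  have hdB0 : ∀ i, dB i ≠ 0 := by
    intro i h
    have := hdB i
    rw [h] at this
    simp at this
  have hAB : tadpole p dA 0 a * tadpole p dB ℓ b =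
      Matrix.fromBlocks (Matrix.diagonal (fun i => dA i * dB i) * cycleMatrix p ^ ℓ) 0 0
        (Matrix.diagonal fun j : Fin p =>
          xi p ^ ((j : ℕ) * 0 + a j * p) * xi p ^ ((j : ℕ) * ℓ + b j * p)) := by
    unfold tadpole
    rw [Matrix.fromBlocks_multiply]
    simp only [pow_zero, mul_one, Matrix.mul_zero, Matrix.zero_mul, add_zero, zero_add,
      Matrix.diagonal_mul_diagonal]
    congr 1
    rw [← Matrix.mul_assoc, Matrix.diagonal_mul_diagonal]
  intro μ hμ
  rw [hAB, spectrum_fromBlocks] at hμ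
  rcases hμ with hμh | hμt
  · -- head case
    have hprod : ∏ i, dA i * dB i = 1 := by
      rw [Finset.prod_mul_distrib, hdetA, hdetB, mul_one]
    have hMp : (Matrix.diagonal (fun i => dA i * dB i) * cycleMatrix p ^ ℓ) ^ p = 1 :=
      head_pow_p hp _ hpl hprod
    have hμp : μ ^ p = 1 := pow_eq_one_of_mem_spectrum hMp hμh
    have hBμ : μ ∈ spectrum ℂ (tadpole p dB ℓ b) := by
      unfold tadpole
      rw [spectrum_fromBlocks]
      exact Or.inl (mem_spectrum_head hp dB hdB0 hdetB hpl hμp)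
    have hA1 : (1 : ℂ) ∈ spectrum ℂ (tadpole p dA 0 a) := by
      unfold tadpole
      rw [spectrum_fromBlocks]
      right
      rw [spectrum_diagonal]
      refine ⟨⟨0, hp0⟩, ?_⟩
      simp [ha0 ⟨0, hp0⟩ rfl]
    have : μ = 1 * μ := (one_mul μ).symm
    rw [this]
    exact Set.mul_mem_mul hA1 hBμ
  · -- tail case
    rw [spectrum_diagonal] at hμt
    obtain ⟨j, hj⟩ := hμt
    have hAj : xi p ^ ((j : ℕ) * 0 + a j * p) ∈ spectrum ℂ (tadpole p dA 0 a) := by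
      unfold tadpole
      rw [spectrum_fromBlocks]
      right
      rw [spectrum_diagonal]
      exact ⟨j, rfl⟩
    have hBj : xi p ^ ((j : ℕ) * ℓ + b j * p) ∈ spectrum ℂ (tadpole p dB ℓ b) := by
      unfold tadpole
      rw [spectrum_fromBlocks]
      right
      rw [spectrum_diagonal]
      exact ⟨j, rfl⟩
    rw [← hj]
    exact Set.mul_mem_mul hAj hBj
end
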